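/- arXiv:1310.2578 — 2 statements merged into one kernel-verified Lean document; each statement's English description precedes it below -/
import Mathlib

section
/- Let λx, λy, v₁, v₂ ∈ ℝ with v₁, v₂ > 0, and let θ₁, θ₂ ∈ ℝ with sin θ₁ ≠ 0, sin θ₂ ≠ 0, cos θ₁ ≠ 0, cos θ₂ ≠ 0. Suppose λy₁ · tan θ₁ = λx, λy₂ · tan θ₂ = λx, λx ≠ 0, and λx·v₁·sin θ₁ + λy₁·v₁·cos θ₁ = λx·v₂·sin θ₂ + λy₂·v₂·cos θ₂. Then v₁ / v₂ = sin θ₁ / sin θ₂. -/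
theorem generalized_snell_velocity (lx ly₁ ly₂ v₁ v₂ θ₁ θ₂ : ℝ)
    (hv₁ : 0 < v₁) (hv₂ : 0 < v₂)
    (hs₁ : Real.sin θ₁ ≠ 0) (hs₂ : Real.sin θ₂ ≠ 0)
    (hc₁ : Real.cos θ₁ ≠ 0) (hc₂ : Real.cos θ₂ ≠ 0)
    (h₁ : ly₁ * Real.tan θ₁ = lx) (h₂ : ly₂ * Real.tan θ₂ = lx)
    (hlx : lx ≠ 0)
    (hH : lx * v₁ * Real.sin θ₁ + ly₁ * v₁ * Real.cos θ₁
        = lx * v₂ * Real.sin θ₂ + ly₂ * v₂ * Real.cos θ₂) :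
    v₁ / v₂ = Real.sin θ₁ / Real.sin θ₂ := by
  rw [Real.tan_eq_sin_div_cos] at h₁ h₂
  have e₁ : ly₁ = lx * Real.cos θ₁ / Real.sin θ₁ := by
    field_simp at h₁ ⊢; linarith
  have e₂ : ly₂ = lx * Real.cos θ₂ / Real.sin θ₂ := by
    field_simp at h₂ ⊢; linarith
  subst e₁ e₂
  have p₁ := Real.sin_sq_add_cos_sq θ₁
  have p₂ := Real.sin_sq_add_cos_sq θ₂
  have key : lx * v₁ * Real.sin θ₂ = lx * v₂ * Real.sin θ₁ := by
    field_simp at hH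
    linear_combination lx * (hH - v₁ * Real.sin θ₂ * p₁ + v₂ * Real.sin θ₁ * p₂)
  field_simp
  apply mul_left_cancel₀ hlx
  linear_combination key
end

section
/- Let λx ≠ 0, v₁, v₂, r₁, r₂ > 0, λθ ≥ 0, and angles θ*, θ₁, θ₂ with sin θ₁ ≠ 0, sin θ₂ ≠ 0. Define Δθ₁ = θ* − θ₁ and Δθ₂ = θ₂ − θ*, and assume cos Δθ₁ ≠ 1 and cos Δθ₂ ≠ 1. If λθ·(v₁/r₁) = −(λx·v₁/sin θ₁)·(1 − cos Δθ₁) and λθ·(v₂/r₂) = −(λx·v₂/sin θ₂)·(1 − cos Δθ₂), then r₁ / r₂ = (sin θ₁·(1 − cos Δθ₂)) / (sin θ₂·(1 − cos Δθ₁)). -/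
theorem refraction_law_radii (lx lθ v₁ v₂ r₁ r₂ θstar θ₁ θ₂ : ℝ)
    (hlx : lx ≠ 0) (hv₁ : 0 < v₁) (hv₂ : 0 < v₂) (hr₁ : 0 < r₁) (hr₂ : 0 < r₂)
    (hlθ : 0 ≤ lθ)
    (hs₁ : Real.sin θ₁ ≠ 0) (hs₂ : Real.sin θ₂ ≠ 0)
    (hΔ₁ : Real.cos (θstar - θ₁) ≠ 1) (hΔ₂ : Real.cos (θ₂ - θstar) ≠ 1)
    (h₁ : lθ * (v₁ / r₁) = -(lx * v₁ / Real.sin θ₁) * (1 - Real.cos (θstar - θ₁)))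
    (h₂ : lθ * (v₂ / r₂) = -(lx * v₂ / Real.sin θ₂) * (1 - Real.cos (θ₂ - θstar))) :
    r₁ / r₂ = (Real.sin θ₁ * (1 - Real.cos (θ₂ - θstar)))
            / (Real.sin θ₂ * (1 - Real.cos (θstar - θ₁))) := by
  have hc₁ : 1 - Real.cos (θstar - θ₁) ≠ 0 := by
    intro h; apply hΔ₁; linarith
  have hc₂ : 1 - Real.cos (θ₂ - θstar) ≠ 0 := by
    intro h; apply hΔ₂; linarith
  have hlθ' : lθ ≠ 0 := by
    intro h
    rw [h, zero_mul] at h₁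
    have : -(lx * v₁ / Real.sin θ₁) * (1 - Real.cos (θstar - θ₁)) ≠ 0 := by
      apply mul_ne_zero _ hc₁
      simp only [neg_ne_zero]
      exact div_ne_zero (mul_ne_zero hlx hv₁.ne') hs₁
    exact this h₁.symm
  field_simp at h₁ h₂ ⊢
  have e₁ : lθ * Real.sin θ₁ = -(lx * (1 - Real.cos (θstar - θ₁)) * r₁) := by
    apply mul_left_cancel₀ hv₁.ne'
    linear_combination v₁ * h₁
  have e₂ : lθ * Real.sin θ₂ = -(lx * (1 - Real.cos (θ₂ - θstar)) * r₂) := by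
    apply mul_left_cancel₀ hv₂.ne'
    linear_combination v₂ * h₂
  apply mul_left_cancel₀ (mul_ne_zero hlx hlθ')
  linear_combination (lθ * Real.sin θ₂) * e₁ - (lθ * Real.sin θ₁) * e₂
end
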